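/- arXiv:2511.14568 — 3 statements merged into one kernel-verified Lean document; each statement's English description precedes it below -/
import Mathlib

section
/- Let α > 0 (exponential parameter) and let λ ∈ ℝ, λ ≠ 0. Set L_λ := Σ_{n≥1} (-1)^{n-1}·λ^n·X^n/n ∈ ℝ⟦X⟧ (the formal series of log(1+λX)), e := L_λ·(αλ - L_λ)^{-1} (the series αλ - L_λ has invertible constant coefficient αλ), and ē := (1/λ)·( Exp∘( αλ·X·(1+X)^{-1} ) - 1 ) ∈ ℝ⟦X⟧. Then for all natural numbers n ≥ k: c_n( e^k / k! ) = Σ_{j=k}^{n} binom(j,k)·(j-1)_{j-k}·α^{-j}·λ^{n-j}·S₁(n,j) and c_n( ē^k / k! ) = Σ_{j=k}^{n} binom(n,j)·(-1)^{n-j}·(n-1)_{n-j}·α^j·λ^{j-k}·S₂(j,k). -/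
open PowerSeries Finset

noncomputable section

/-- `cN n F = n! * (coefficient of X^n in F)`. -/
def cN (n : ℕ) (F : PowerSeries ℝ) : ℝ := (n.factorial : ℝ) * PowerSeries.coeff (R := ℝ) n F

/-- Formal substitution `F ∘ G` (faithful when `G` has zero constant coefficient). -/
def pcomp (F G : PowerSeries ℝ) : PowerSeries ℝ :=
  PowerSeries.mk fun n =>
    ∑ k ∈ Finset.range (n + 1), (PowerSeries.coeff (R := ℝ) k F) * (PowerSeries.coeff (R := ℝ) n (G ^ k))

/-- The formal series of log(1+X). -/
def L : PowerSeries ℝ := PowerSeries.mk fun n => if n = 0 then 0 else (-1 : ℝ) ^ (n - 1) / n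

/-- Falling factorial `(y)_m`. -/
def ff (y : ℝ) (m : ℕ) : ℝ := ∏ i ∈ Finset.range m, (y - i)

/-- Rising factorial `⟨y⟩_m`. -/
def rf (y : ℝ) (m : ℕ) : ℝ := ∏ i ∈ Finset.range m, (y + i)

/-- Degenerate falling factorial `(x)_{n,λ}`. -/
def ffl (x : ℝ) (n : ℕ) (lam : ℝ) : ℝ := ∏ i ∈ Finset.range n, (x - i * lam)

/-- Stirling numbers of the second kind. -/
def S2 (n k : ℕ) : ℝ :=
  (k.factorial : ℝ)⁻¹ * ∑ j ∈ Finset.range (k + 1), (-1 : ℝ) ^ (k - j) * (k.choose j) * (j : ℝ) ^ n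

/-- The falling factorial polynomial `x(x-1)⋯(x-n+1)`. -/
def fallingPoly (n : ℕ) : Polynomial ℝ := ∏ i ∈ Finset.range n, (Polynomial.X - Polynomial.C (i : ℝ))

/-- (Signed) Stirling numbers of the first kind. -/
def S1 (n k : ℕ) : ℝ := (fallingPoly n).coeff k

/-- Degenerate Stirling numbers of the second kind. -/
def S2d (lam : ℝ) (n k : ℕ) : ℝ :=
  (k.factorial : ℝ)⁻¹ *
    ∑ j ∈ Finset.range (k + 1), (-1 : ℝ) ^ (k - j) * (k.choose j) * ffl (j : ℝ) n lam

/-- Formal degenerate exponential `e_λ`. -/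
def degExp (lam : ℝ) : PowerSeries ℝ := PowerSeries.mk fun n => ffl 1 n lam / n.factorial

/-- Formal degenerate logarithm `Λ_λ` of `1+X`. -/
def degLog (lam : ℝ) : PowerSeries ℝ :=
  lam⁻¹ • PowerSeries.mk fun n => if n = 0 then 0 else ff lam n / n.factorial

/-- Degenerate Stirling numbers of the first kind. -/
def S1d (lam : ℝ) (n k : ℕ) : ℝ := cN n ((k.factorial : ℝ)⁻¹ • (degLog lam) ^ k)

/-- Binomial series `(1+X)^c`. -/
def binser (c : ℝ) : PowerSeries ℝ := PowerSeries.mk fun n => ff c n / n.factorial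

/-- Frobenius–Euler numbers of order `j`. -/
def FE (u : ℝ) (j n : ℕ) : ℝ :=
  cN n (((1 - u) • (PowerSeries.exp ℝ - PowerSeries.C (R := ℝ) u)⁻¹) ^ j)

/-- The formal series of `log(1+λX)`. -/
def Llam (lam : ℝ) : PowerSeries ℝ :=
  PowerSeries.mk fun n => if n = 0 then 0 else (-1 : ℝ) ^ (n - 1) * lam ^ n / n

lemma ff_nat (N m : ℕ) : ff (N : ℝ) m = (N.descFactorial m : ℝ) := by
  induction m with
  | zero => simp [ff]
  | succ m ih =>
    rw [ff, Finset.prod_range_succ, ← ff, ih, Nat.descFactorial_succ]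
    by_cases h : m ≤ N
    · push_cast [h]; ring
    · simp [Nat.descFactorial_eq_zero_iff_lt.mpr (show N < m by omega)]

lemma coeff_pow_zero_of_lt {F : PowerSeries ℝ} (hF : PowerSeries.constantCoeff (R := ℝ) F = 0)
    {n j : ℕ} (h : n < j) : PowerSeries.coeff (R := ℝ) n (F ^ j) = 0 := by
  have hd : (PowerSeries.X : PowerSeries ℝ) ^ j ∣ F ^ j :=
    pow_dvd_pow_of_dvd (PowerSeries.X_dvd_iff.mpr hF) j
  exact PowerSeries.X_pow_dvd_iff.mp hd n h

lemma Binv_eq : (1 + PowerSeries.X : PowerSeries ℝ)⁻¹ = PowerSeries.mk fun m => (-1 : ℝ) ^ m := by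
  have hc : PowerSeries.constantCoeff (R := ℝ) (1 + PowerSeries.X) ≠ 0 := by simp
  rw [eq_comm, PowerSeries.eq_inv_iff_mul_eq_one hc]
  ext n
  rw [mul_add, mul_one, map_add]
  cases n with
  | zero => simp
  | succ m => simp [PowerSeries.coeff_succ_mul_X, PowerSeries.coeff_mk, pow_succ]
lemma hockey (t : ℕ) : ∀ m : ℕ, ∑ a ∈ Finset.range (m + 1), (a + t).choose t = (m + t + 1).choose (t + 1) := by
  intro m
  induction m with
  | zero => simp
  | succ m ih =>
    rw [Finset.sum_range_succ, ih]
    have : m + 1 + t + 1 = (m + t + 1) + 1 := by omega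
    rw [this, Nat.choose_succ_succ (m + t + 1) t, show m + 1 + t = m + t + 1 from by omega]
    simp only [Nat.succ_eq_add_one]
    omega

lemma coeff_Binv_pow (j m : ℕ) :
    PowerSeries.coeff (R := ℝ) m (((1 + PowerSeries.X : PowerSeries ℝ))⁻¹ ^ j)
      = (-1 : ℝ) ^ m * ((m + j - 1).choose m : ℝ) := by
  induction j generalizing m with
  | zero =>
    cases m with
    | zero => simp
    | succ m => simp [Nat.choose_eq_zero_of_lt (show m + 1 - 1 < m + 1 by omega)]
  | succ j ih =>
    rw [pow_succ, PowerSeries.coeff_mul, Finset.Nat.sum_antidiagonal_eq_sum_range_succ_mk]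
    rcases Nat.eq_zero_or_pos j with hj | hj
    · subst hj
      simp only [pow_zero, PowerSeries.coeff_one]
      rw [Finset.sum_eq_single 0 (by intro b hb hb0; simp [hb0]) (by simp)]
      simp [Binv_eq, PowerSeries.coeff_mk, Nat.choose_self]
    · have : ∀ a ∈ Finset.range (m + 1),
          PowerSeries.coeff (R := ℝ) a ((1 + PowerSeries.X : PowerSeries ℝ)⁻¹ ^ j) *
            PowerSeries.coeff (R := ℝ) (m - a) ((1 + PowerSeries.X : PowerSeries ℝ)⁻¹)
          = (-1 : ℝ) ^ m * ((a + (j - 1)).choose (j - 1) : ℝ) := by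
        intro a ha
        rw [ih, Binv_eq, PowerSeries.coeff_mk]
        have ham : a ≤ m := by simpa using Nat.lt_succ_iff.mp (Finset.mem_range.mp ha)
        have h1 : a + j - 1 = a + (j - 1) := by omega
        have h2 : (a + (j - 1)).choose a = (a + (j - 1)).choose (j - 1) := by
          rw [← Nat.choose_symm (Nat.le_add_left _ _)]
          congr 1; omega
        rw [h1, h2, mul_right_comm, ← pow_add]
        have : a + (m - a) = m := by omega
        rw [this]
      rw [Finset.sum_congr rfl this, ← Finset.mul_sum]
      congr 1
      rw [← Nat.cast_sum, hockey (j - 1) m, Nat.cast_inj]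
      have h1 : m + (j - 1) + 1 = m + j := by omega
      have h2 : j - 1 + 1 = j := by omega
      rw [h1, h2]
      have := Nat.choose_symm (show m ≤ m + j by omega)
      have h3 : m + j - m = j := by omega
      rw [h3] at this
      rw [this]
      congr 1

lemma coeff_expm1_pow (k j : ℕ) :
    PowerSeries.coeff (R := ℝ) j ((PowerSeries.exp ℝ - 1) ^ k)
      = (k.factorial : ℝ) * S2 j k / (j.factorial : ℝ) := by
  rw [sub_pow, map_sum]
  have hterm : ∀ i ∈ Finset.range (k + 1),
      PowerSeries.coeff (R := ℝ) j
          ((-1 : PowerSeries ℝ) ^ (i + k) * PowerSeries.exp ℝ ^ i * 1 ^ (k - i) * ((k.choose i : ℕ) : PowerSeries ℝ))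
        = (-1 : ℝ) ^ (k - i) * (k.choose i : ℝ) * (i : ℝ) ^ j / (j.factorial : ℝ) := by
    intro i hi
    have hik : i ≤ k := Nat.lt_succ_iff.mp (Finset.mem_range.mp hi)
    have hre : PowerSeries.coeff (R := ℝ) j (PowerSeries.exp ℝ ^ i) = (i : ℝ) ^ j / (j.factorial : ℝ) := by
      rw [PowerSeries.exp_pow_eq_rescale_exp, PowerSeries.coeff_rescale, PowerSeries.coeff_exp]
      have : (algebraMap ℚ ℝ) (1 / (j.factorial : ℚ)) = 1 / (j.factorial : ℝ) := by
        push_cast; simp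
      rw [this]; ring
    have hsgn : (-1 : ℝ) ^ (i + k) = (-1 : ℝ) ^ (k - i) := by
      have : i + k = (k - i) + 2 * i := by omega
      rw [this, pow_add, pow_mul]; simp
    have e1 : ((-1 : PowerSeries ℝ) ^ (i + k)) = PowerSeries.C (R := ℝ) ((-1 : ℝ) ^ (i + k)) := by
      rw [map_pow, map_neg, map_one]
    have e2 : ((k.choose i : ℕ) : PowerSeries ℝ) = PowerSeries.C (R := ℝ) ((k.choose i : ℕ) : ℝ) := by
      rw [map_natCast]
    rw [one_pow, mul_one, e1, e2, mul_right_comm, ← map_mul, PowerSeries.coeff_C_mul, hre, hsgn]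
    ring
  rw [Finset.sum_congr rfl hterm, S2, Finset.mul_sum]
  rw [Finset.mul_sum, Finset.sum_div]
  refine Finset.sum_congr rfl fun i hi => ?_
  have hk : (k.factorial : ℝ) ≠ 0 := Nat.cast_ne_zero.mpr (Nat.factorial_ne_zero k)
  field_simp

lemma S2_eq_zero {j k : ℕ} (h : j < k) : S2 j k = 0 := by
  have h0 : PowerSeries.constantCoeff (R := ℝ) (PowerSeries.exp ℝ - 1) = 0 := by
    simp [PowerSeries.constantCoeff_exp]
  have := coeff_pow_zero_of_lt h0 h
  rw [coeff_expm1_pow] at this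
  have hk : (k.factorial : ℝ) ≠ 0 := Nat.cast_ne_zero.mpr (Nat.factorial_ne_zero k)
  have hj : (j.factorial : ℝ) ≠ 0 := Nat.cast_ne_zero.mpr (Nat.factorial_ne_zero j)
  field_simp at this
  exact (mul_eq_zero.mp (this.trans (mul_zero _))).resolve_left hk

lemma coeff_pcomp (F G : PowerSeries ℝ) (n : ℕ) :
    PowerSeries.coeff (R := ℝ) n (pcomp F G)
      = ∑ k ∈ Finset.range (n + 1), PowerSeries.coeff (R := ℝ) k F * PowerSeries.coeff (R := ℝ) n (G ^ k) := by
  rw [pcomp, PowerSeries.coeff_mk]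

lemma pcomp_sub_one (F G : PowerSeries ℝ) : pcomp (F - 1) G = pcomp F G - 1 := by
  ext n
  rw [map_sub, coeff_pcomp, coeff_pcomp]
  have : ∀ k ∈ Finset.range (n + 1),
      PowerSeries.coeff (R := ℝ) k (F - 1) * PowerSeries.coeff (R := ℝ) n (G ^ k)
        = PowerSeries.coeff (R := ℝ) k F * PowerSeries.coeff (R := ℝ) n (G ^ k)
          - PowerSeries.coeff (R := ℝ) k (1 : PowerSeries ℝ) * PowerSeries.coeff (R := ℝ) n (G ^ k) := by
    intro k _; rw [map_sub]; ring
  rw [Finset.sum_congr rfl this, Finset.sum_sub_distrib]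
  congr 1
  rw [Finset.sum_eq_single 0 (fun b _ hb => by simp [PowerSeries.coeff_one, hb]) (by simp)]
  simp

lemma pcomp_mul (F F' G : PowerSeries ℝ) (hG : PowerSeries.constantCoeff (R := ℝ) G = 0) :
    pcomp F G * pcomp F' G = pcomp (F * F') G := by
  ext n
  have hext : ∀ m, m ≤ n → ∀ (H : PowerSeries ℝ),
      PowerSeries.coeff (R := ℝ) m (pcomp H G)
        = ∑ a ∈ Finset.range (n + 1), PowerSeries.coeff (R := ℝ) a H * PowerSeries.coeff (R := ℝ) m (G ^ a) := by
    intro m hm H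
    rw [coeff_pcomp]
    apply Finset.sum_subset
    · intro a ha; simp only [Finset.mem_range] at *; omega
    · intro a _ ha
      rw [coeff_pow_zero_of_lt hG (by simp only [Finset.mem_range] at ha; omega)]
      ring
  rw [PowerSeries.coeff_mul]
  have h1 : ∀ p ∈ Finset.HasAntidiagonal.antidiagonal n,
      PowerSeries.coeff (R := ℝ) p.1 (pcomp F G) * PowerSeries.coeff (R := ℝ) p.2 (pcomp F' G)
        = ∑ a ∈ Finset.range (n + 1), ∑ b ∈ Finset.range (n + 1),
            PowerSeries.coeff (R := ℝ) a F * PowerSeries.coeff (R := ℝ) b F'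
              * (PowerSeries.coeff (R := ℝ) p.1 (G ^ a) * PowerSeries.coeff (R := ℝ) p.2 (G ^ b)) := by
    intro p hp
    have hmem := Finset.HasAntidiagonal.mem_antidiagonal.mp hp
    rw [hext p.1 (by omega) F, hext p.2 (by omega) F', Finset.sum_mul_sum]
    exact Finset.sum_congr rfl fun a _ => Finset.sum_congr rfl fun b _ => by ring
  rw [Finset.sum_congr rfl h1, Finset.sum_comm]
  have h2 : ∀ a ∈ Finset.range (n + 1),
      ∑ p ∈ Finset.HasAntidiagonal.antidiagonal n, ∑ b ∈ Finset.range (n + 1),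
          PowerSeries.coeff (R := ℝ) a F * PowerSeries.coeff (R := ℝ) b F'
            * (PowerSeries.coeff (R := ℝ) p.1 (G ^ a) * PowerSeries.coeff (R := ℝ) p.2 (G ^ b))
        = ∑ b ∈ Finset.range (n + 1),
            PowerSeries.coeff (R := ℝ) a F * PowerSeries.coeff (R := ℝ) b F'
              * PowerSeries.coeff (R := ℝ) n (G ^ (a + b)) := by
    intro a _
    rw [Finset.sum_comm]
    refine Finset.sum_congr rfl fun b _ => ?_
    rw [← Finset.mul_sum, pow_add, PowerSeries.coeff_mul]
  rw [Finset.sum_congr rfl h2, coeff_pcomp]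
  have h3 : ∀ p ∈ Finset.range (n + 1),
      PowerSeries.coeff (R := ℝ) p (F * F') * PowerSeries.coeff (R := ℝ) n (G ^ p)
        = ∑ q ∈ Finset.HasAntidiagonal.antidiagonal p,
            PowerSeries.coeff (R := ℝ) q.1 F * PowerSeries.coeff (R := ℝ) q.2 F'
              * PowerSeries.coeff (R := ℝ) n (G ^ (q.1 + q.2)) := by
    intro p hp
    rw [PowerSeries.coeff_mul, Finset.sum_mul]
    refine Finset.sum_congr rfl fun q hq => ?_
    rw [Finset.HasAntidiagonal.mem_antidiagonal.mp hq]
  rw [Finset.sum_congr rfl h3]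
  rw [← Finset.sum_biUnion (by
    intro x hx y hy hxy
    simp only [Finset.disjoint_left]
    intro q hq hq'
    exact hxy (by rw [← Finset.HasAntidiagonal.mem_antidiagonal.mp hq, ← Finset.HasAntidiagonal.mem_antidiagonal.mp hq']))]
  have hset : (Finset.range (n + 1)).biUnion Finset.HasAntidiagonal.antidiagonal
      = (Finset.range (n + 1) ×ˢ Finset.range (n + 1)).filter (fun q => q.1 + q.2 ≤ n) := by
    ext ⟨a, b⟩
    simp only [Finset.mem_biUnion, Finset.mem_range, Finset.HasAntidiagonal.mem_antidiagonal,
      Finset.mem_filter, Finset.mem_product]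
    constructor
    · rintro ⟨p, hp, hab⟩; omega
    · intro h; exact ⟨a + b, by omega, rfl⟩
  rw [hset]
  rw [Finset.sum_filter_of_ne (by
    intro q hq hne
    by_contra hgt
    push_neg at hgt
    exact hne (by rw [coeff_pow_zero_of_lt hG (by omega)]; ring))]
  rw [Finset.sum_product]

lemma pcomp_one (G : PowerSeries ℝ) : pcomp 1 G = 1 := by
  ext n
  rw [coeff_pcomp]
  rw [Finset.sum_eq_single 0 (fun b _ hb => by simp [PowerSeries.coeff_one, hb]) (by simp)]
  simp

lemma pcomp_pow (F G : PowerSeries ℝ) (hG : PowerSeries.constantCoeff (R := ℝ) G = 0) (k : ℕ) :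
    (pcomp F G) ^ k = pcomp (F ^ k) G := by
  induction k with
  | zero => simpa using (pcomp_one G).symm
  | succ k ih => rw [pow_succ, ih, pcomp_mul _ _ _ hG, ← pow_succ]

lemma keyid (j k : ℕ) (h : k ≤ j) :
    (((j - 1).choose (j - k) : ℕ) : ℝ) * ((k.factorial : ℝ))⁻¹ * (j.factorial : ℝ)
      = ((j.choose k : ℕ) : ℝ) * ff ((j : ℝ) - 1) (j - k) := by
  rcases Nat.eq_zero_or_pos j with hj | hj
  · subst hj
    have hk : k = 0 := by omega
    subst hk
    simp [ff]
  · have e1 : ((j : ℝ) - 1) = (((j - 1 : ℕ) : ℝ)) := by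
      push_cast [Nat.cast_sub hj]; ring
    rw [e1, ff_nat, Nat.descFactorial_eq_factorial_mul_choose]
    have hfact := Nat.choose_mul_factorial_mul_factorial h
    have hk : (k.factorial : ℝ) ≠ 0 := Nat.cast_ne_zero.mpr (Nat.factorial_ne_zero k)
    have : (j.factorial : ℝ) = (j.choose k : ℝ) * (k.factorial : ℝ) * ((j - k).factorial : ℝ) := by
      rw [← Nat.cast_mul, ← Nat.cast_mul, hfact]
    rw [this]
    push_cast
    field_simp

lemma part2 (α lam : ℝ) (hα : α ≠ 0) (hlam : lam ≠ 0) (n k : ℕ) (hkn : k ≤ n) :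
    cN n ((k.factorial : ℝ)⁻¹ •
        (lam⁻¹ • (pcomp (PowerSeries.exp ℝ)
          ((α * lam) • (PowerSeries.X * (1 + PowerSeries.X)⁻¹)) - 1)) ^ k)
        = ∑ j ∈ Finset.Icc k n,
            (n.choose j : ℝ) * (-1 : ℝ) ^ (n - j) * ff ((n : ℝ) - 1) (n - j) * α ^ j *
              lam ^ (j - k) * S2 j k := by
  set B : PowerSeries ℝ := (1 + PowerSeries.X)⁻¹ with hB
  set G : PowerSeries ℝ := (α * lam) • (PowerSeries.X * B) with hGdef
  have hG : PowerSeries.constantCoeff (R := ℝ) G = 0 := by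
    rw [hGdef, PowerSeries.constantCoeff_smul, map_mul]
    simp
  have hQ : pcomp (PowerSeries.exp ℝ) G - 1 = pcomp (PowerSeries.exp ℝ - 1) G :=
    (pcomp_sub_one _ _).symm
  rw [hQ, smul_pow, pcomp_pow _ _ hG]
  have hcoeffG : ∀ j, j ≤ n → PowerSeries.coeff (R := ℝ) n (G ^ j)
      = (α * lam) ^ j * ((-1 : ℝ) ^ (n - j) * ((n - 1).choose (n - j) : ℝ)) := by
    intro j hj
    rw [hGdef, smul_pow, map_smul, smul_eq_mul, mul_pow PowerSeries.X B j]
    congr 1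
    have h1 : PowerSeries.coeff (R := ℝ) n (PowerSeries.X ^ j * B ^ j)
        = PowerSeries.coeff (R := ℝ) (n - j) (B ^ j) := by
      have h2 := PowerSeries.coeff_X_pow_mul (B ^ j) j (n - j)
      rwa [show n - j + j = n from by omega] at h2
    rw [h1, hB, coeff_Binv_pow, show n - j + j - 1 = n - 1 from by omega]
  rw [cN, map_smul, map_smul, smul_eq_mul, smul_eq_mul, coeff_pcomp]
  have hsum : ∑ j ∈ Finset.range (n + 1),
      PowerSeries.coeff (R := ℝ) j ((PowerSeries.exp ℝ - 1) ^ k) * PowerSeries.coeff (R := ℝ) n (G ^ j)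
      = ∑ j ∈ Finset.Icc k n,
          (k.factorial : ℝ) * S2 j k / (j.factorial : ℝ)
            * ((α * lam) ^ j * ((-1 : ℝ) ^ (n - j) * ((n - 1).choose (n - j) : ℝ))) := by
    rw [← Finset.sum_subset (show Finset.Icc k n ⊆ Finset.range (n+1) from by
        intro j hj; simp only [Finset.mem_Icc] at hj; simp only [Finset.mem_range]; omega)
      (by
        intro j hj hj2
        simp only [Finset.mem_range] at hj
        simp only [Finset.mem_Icc] at hj2
        have hjk : j < k := by omega
        rw [coeff_expm1_pow, S2_eq_zero hjk]
        simp)]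
    refine Finset.sum_congr rfl fun j hj => ?_
    simp only [Finset.mem_Icc] at hj
    rw [coeff_expm1_pow, hcoeffG j hj.2]
  rw [hsum, Finset.mul_sum, Finset.mul_sum, Finset.mul_sum]
  refine Finset.sum_congr rfl fun j hj => ?_
  simp only [Finset.mem_Icc] at hj
  have hkey := keyid n j hj.2
  have hjf : (j.factorial : ℝ) ≠ 0 := Nat.cast_ne_zero.mpr (Nat.factorial_ne_zero j)
  have hkf : (k.factorial : ℝ) ≠ 0 := Nat.cast_ne_zero.mpr (Nat.factorial_ne_zero k)
  rw [mul_pow α lam, show lam ^ j = lam ^ (j - k) * lam ^ k from by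
    rw [← pow_add]; congr 1; omega]
  rw [div_eq_mul_inv]
  have e2k : lam⁻¹ ^ k * lam ^ k = 1 := by
    rw [← mul_pow, inv_mul_cancel₀ hlam, one_pow]
  have e1 : (k.factorial : ℝ)⁻¹ * (k.factorial : ℝ) = 1 := inv_mul_cancel₀ hkf
  calc (n.factorial : ℝ) * ((k.factorial : ℝ)⁻¹ * (lam⁻¹ ^ k *
          ((k.factorial : ℝ) * S2 j k * (j.factorial : ℝ)⁻¹ *
            (α ^ j * (lam ^ (j - k) * lam ^ k) * ((-1 : ℝ) ^ (n - j) * (((n-1).choose (n-j) : ℕ) : ℝ))))))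
      = ((((n-1).choose (n-j) : ℕ) : ℝ) * (j.factorial : ℝ)⁻¹ * (n.factorial : ℝ))
          * (S2 j k * (-1 : ℝ) ^ (n - j) * α ^ j * lam ^ (j - k))
          * (lam⁻¹ ^ k * lam ^ k) * ((k.factorial : ℝ)⁻¹ * (k.factorial : ℝ)) := by ring
    _ = (((n.choose j : ℕ) : ℝ) * ff ((n : ℝ) - 1) (n - j))
          * (S2 j k * (-1 : ℝ) ^ (n - j) * α ^ j * lam ^ (j - k)) * 1 * 1 := by
        rw [hkey, e2k, e1]
    _ = ((n.choose j : ℕ) : ℝ) * (-1 : ℝ) ^ (n - j) * ff ((n : ℝ) - 1) (n - j) * α ^ j *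
          lam ^ (j - k) * S2 j k := by ring

open scoped PowerSeries in
lemma onePlusX_mul_dL : (1 + PowerSeries.X : PowerSeries ℝ) * (d⁄dX ℝ) L = 1 := by
  have hdL : (d⁄dX ℝ) L = PowerSeries.mk fun m => (-1 : ℝ) ^ m := by
    ext m
    rw [PowerSeries.coeff_derivative, PowerSeries.coeff_mk, L, PowerSeries.coeff_mk]
    simp only [Nat.succ_ne_zero, if_false, Nat.add_sub_cancel]
    field_simp
    push_cast
    rfl
  rw [hdL]
  ext m
  rw [add_mul, one_mul, map_add]
  cases m with
  | zero => simp
  | succ i => simp [PowerSeries.coeff_succ_X_mul, PowerSeries.coeff_mk, pow_succ]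

lemma L_rec (n j : ℕ) :
    ((n : ℝ) + 1) * PowerSeries.coeff (R := ℝ) (n + 1) (L ^ (j + 1))
        + (n : ℝ) * PowerSeries.coeff (R := ℝ) n (L ^ (j + 1))
      = ((j : ℝ) + 1) * PowerSeries.coeff (R := ℝ) n (L ^ j) := by
  have h1 : (PowerSeries.derivative ℝ) (L ^ (j + 1))
      = ((j + 1 : ℕ) : PowerSeries ℝ) * (L ^ j * (PowerSeries.derivative ℝ) L) := by
    have := Derivation.leibniz_pow (PowerSeries.derivative ℝ) (a := L) (j + 1)
    rw [this, Nat.add_sub_cancel, smul_eq_mul, nsmul_eq_mul]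
  have hD : (PowerSeries.derivative ℝ) (L ^ (j + 1))
        + PowerSeries.X * (PowerSeries.derivative ℝ) (L ^ (j + 1))
      = ((j + 1 : ℕ) : PowerSeries ℝ) * L ^ j := by
    calc (PowerSeries.derivative ℝ) (L ^ (j + 1))
          + PowerSeries.X * (PowerSeries.derivative ℝ) (L ^ (j + 1))
        = (1 + PowerSeries.X) * (PowerSeries.derivative ℝ) (L ^ (j + 1)) := by ring
      _ = ((j + 1 : ℕ) : PowerSeries ℝ) * (L ^ j * ((1 + PowerSeries.X) * (PowerSeries.derivative ℝ) L)) := by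
          rw [h1]; ring
      _ = ((j + 1 : ℕ) : PowerSeries ℝ) * L ^ j := by rw [onePlusX_mul_dL, mul_one]
  have hc := congrArg (PowerSeries.coeff (R := ℝ) n) hD
  have hcast : ∀ m : ℕ, ∀ F : PowerSeries ℝ,
      PowerSeries.coeff (R := ℝ) m (((j + 1 : ℕ) : PowerSeries ℝ) * F)
        = ((j : ℝ) + 1) * PowerSeries.coeff (R := ℝ) m F := by
    intro m F
    rw [show ((j + 1 : ℕ) : PowerSeries ℝ) = PowerSeries.C (R := ℝ) ((j : ℝ) + 1) from by
      rw [← map_natCast (PowerSeries.C (R := ℝ)) (j + 1)]; push_cast; ring_nf]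
    rw [PowerSeries.coeff_C_mul]
  rw [map_add, PowerSeries.coeff_derivative, hcast] at hc
  cases n with
  | zero =>
    have hx : PowerSeries.coeff (R := ℝ) 0 (PowerSeries.X * (PowerSeries.derivative ℝ) (L ^ (j + 1))) = 0 := by
      rw [PowerSeries.coeff_zero_eq_constantCoeff, map_mul, PowerSeries.constantCoeff_X, zero_mul]
    rw [hx] at hc
    push_cast at hc ⊢
    linarith
  | succ m =>
    rw [PowerSeries.coeff_succ_X_mul, PowerSeries.coeff_derivative] at hc
    push_cast at hc ⊢
    linarith

lemma S1_zero (j : ℕ) : S1 0 j = if j = 0 then 1 else 0 := by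
  simp [S1, fallingPoly, Polynomial.coeff_one]

lemma S1_succ_zero (n : ℕ) : S1 (n + 1) 0 = 0 := by
  rw [S1, Polynomial.coeff_zero_eq_eval_zero, fallingPoly, Polynomial.eval_prod]
  exact Finset.prod_eq_zero (Finset.mem_range.mpr (Nat.succ_pos n)) (by simp)

lemma S1_rec (n j : ℕ) : S1 (n + 1) (j + 1) = S1 n j - (n : ℝ) * S1 n (j + 1) := by
  rw [S1, S1, S1, fallingPoly, Finset.prod_range_succ, ← fallingPoly, mul_sub,
    Polynomial.coeff_sub, Polynomial.coeff_mul_X, Polynomial.coeff_mul_C]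
  ring

lemma coeff_L_pow (n : ℕ) : ∀ j : ℕ,
    (n.factorial : ℝ) * PowerSeries.coeff (R := ℝ) n (L ^ j) = (j.factorial : ℝ) * S1 n j := by
  induction n with
  | zero =>
    intro j
    rw [PowerSeries.coeff_zero_eq_constantCoeff, map_pow]
    have hL0 : PowerSeries.constantCoeff (R := ℝ) L = 0 := by simp [L]
    rw [hL0, S1_zero]
    cases j with
    | zero => simp
    | succ j => simp [pow_succ]
  | succ n ih =>
    intro j
    cases j with
    | zero =>
      rw [pow_zero, S1_succ_zero, PowerSeries.coeff_one]
      simp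
    | succ j =>
      have hrec := L_rec n j
      have h1 := ih j
      have h2 := ih (j + 1)
      rw [Nat.factorial_succ, Nat.factorial_succ j, S1_rec]
      push_cast
      push_cast [Nat.factorial_succ] at h2
      linear_combination (n.factorial : ℝ) * hrec + ((j : ℝ) + 1) * h1 - (n : ℝ) * h2

lemma Llam_eq_rescale (lam : ℝ) : Llam lam = PowerSeries.rescale lam L := by
  ext m
  rw [PowerSeries.coeff_rescale, Llam, L, PowerSeries.coeff_mk, PowerSeries.coeff_mk]
  cases m with
  | zero => simp
  | succ i => simp only [Nat.succ_ne_zero, if_false]; ring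

lemma coeff_Llam_pow (lam : ℝ) (n j : ℕ) :
    PowerSeries.coeff (R := ℝ) n ((Llam lam) ^ j) = lam ^ n * PowerSeries.coeff (R := ℝ) n (L ^ j) := by
  rw [Llam_eq_rescale, ← map_pow, PowerSeries.coeff_rescale]

lemma constantCoeff_Llam (lam : ℝ) : PowerSeries.constantCoeff (R := ℝ) (Llam lam) = 0 := by
  simp [Llam]

lemma coeff_mul_mkSum (F G : PowerSeries ℝ) (hG : PowerSeries.constantCoeff (R := ℝ) G = 0)
    (d : ℕ → ℝ) (k n : ℕ) :
    PowerSeries.coeff (R := ℝ) n (F * PowerSeries.mk fun m =>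
        ∑ j ∈ Finset.Icc k m, d j * PowerSeries.coeff (R := ℝ) m (G ^ j))
      = ∑ j ∈ Finset.Icc k n, d j * PowerSeries.coeff (R := ℝ) n (F * G ^ j) := by
  rw [PowerSeries.coeff_mul]
  have h1 : ∀ p ∈ Finset.HasAntidiagonal.antidiagonal n,
      PowerSeries.coeff (R := ℝ) p.1 F * PowerSeries.coeff (R := ℝ) p.2 (PowerSeries.mk fun m =>
          ∑ j ∈ Finset.Icc k m, d j * PowerSeries.coeff (R := ℝ) m (G ^ j))
        = ∑ j ∈ Finset.Icc k n,
            d j * (PowerSeries.coeff (R := ℝ) p.1 F * PowerSeries.coeff (R := ℝ) p.2 (G ^ j)) := by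
    intro p hp
    have hpn := Finset.HasAntidiagonal.mem_antidiagonal.mp hp
    rw [PowerSeries.coeff_mk]
    rw [Finset.sum_subset (show Finset.Icc k p.2 ⊆ Finset.Icc k n from by
        intro j hj; simp only [Finset.mem_Icc] at *; omega)
      (by
        intro j hj hj2
        simp only [Finset.mem_Icc] at hj hj2
        rw [coeff_pow_zero_of_lt hG (show p.2 < j by omega)]
        ring)]
    rw [Finset.mul_sum]
    exact Finset.sum_congr rfl fun j _ => by ring
  rw [Finset.sum_congr rfl h1, Finset.sum_comm]
  refine Finset.sum_congr rfl fun j _ => ?_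
  rw [← Finset.mul_sum, PowerSeries.coeff_mul]

lemma sum_shift (lam : ℝ) (g : ℕ → ℝ) (m n : ℕ) :
    ∑ j ∈ Finset.Icc m n, g j * PowerSeries.coeff (R := ℝ) n ((Llam lam) ^ (j + 1))
      = ∑ j ∈ Finset.Icc (m + 1) n, g (j - 1) * PowerSeries.coeff (R := ℝ) n ((Llam lam) ^ j) := by
  rcases Nat.lt_or_ge n m with h | h
  · rw [Finset.Icc_eq_empty (by omega), Finset.Icc_eq_empty (by omega)]
    simp
  · have e1 : ∑ j ∈ Finset.Icc m n, g j * PowerSeries.coeff (R := ℝ) n ((Llam lam) ^ (j + 1))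
        = ∑ j ∈ Finset.Icc (m + 1) (n + 1), g (j - 1) * PowerSeries.coeff (R := ℝ) n ((Llam lam) ^ j) := by
      apply Finset.sum_nbij' (fun j => j + 1) (fun j => j - 1)
      · intro a ha; simp only [Finset.mem_Icc] at *; omega
      · intro a ha; simp only [Finset.mem_Icc] at *; omega
      · intro a ha; simp only [Finset.mem_Icc] at ha; omega
      · intro a ha; simp only [Finset.mem_Icc] at ha; omega
      · intro a ha; simp only [Finset.mem_Icc] at ha
        rw [Nat.add_sub_cancel]
    rw [e1, Finset.sum_Icc_succ_top (by omega : m + 1 ≤ n + 1)]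
    rw [coeff_pow_zero_of_lt (constantCoeff_Llam lam) (Nat.lt_succ_self n)]
    simp

def dd (c : ℝ) (k j : ℕ) : ℝ :=
  (((j - 1).choose (j - k) : ℕ) : ℝ) * ((k.factorial : ℝ))⁻¹ * (c⁻¹) ^ j

def TT (lam c : ℝ) (k : ℕ) : PowerSeries ℝ :=
  PowerSeries.mk fun m => ∑ j ∈ Finset.Icc k m, dd c k j * PowerSeries.coeff (R := ℝ) m ((Llam lam) ^ j)

lemma dd_i (c : ℝ) (hc : c ≠ 0) (k : ℕ) :
    ((k : ℝ) + 1) * c * dd c (k + 1) (k + 1) = dd c k k := by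
  simp only [dd, Nat.sub_self, Nat.add_sub_cancel, Nat.choose_zero_right]
  have hkf : (k.factorial : ℝ) ≠ 0 := Nat.cast_ne_zero.mpr (Nat.factorial_ne_zero k)
  rw [pow_succ, Nat.factorial_succ]
  push_cast
  field_simp

lemma dd_ii (c : ℝ) (hc : c ≠ 0) (k j : ℕ) (h : k + 2 ≤ j) :
    ((k : ℝ) + 1) * c * dd c (k + 1) j - ((k : ℝ) + 1) * dd c (k + 1) (j - 1)
      = dd c k (j - 1) := by
  obtain ⟨m, rfl⟩ : ∃ m, j = k + 2 + m := ⟨j - (k + 2), by omega⟩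
  simp only [dd]
  rw [show k + 2 + m - 1 = k + m + 1 from by omega,
    show k + 2 + m - (k + 1) = m + 1 from by omega,
    show k + m + 1 - 1 = k + m from by omega,
    show k + m + 1 - (k + 1) = m from by omega,
    show k + m + 1 - k = m + 1 from by omega,
    Nat.choose_succ_succ (k + m) m,
    show k + 2 + m = (k + 1 + m) + 1 from by omega,
    pow_succ, Nat.factorial_succ]
  have hkf : (k.factorial : ℝ) ≠ 0 := Nat.cast_ne_zero.mpr (Nat.factorial_ne_zero k)
  push_cast
  field_simp
  ring

lemma TT_key (lam c : ℝ) (hc : c ≠ 0) (k : ℕ) :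
    (PowerSeries.C (R := ℝ) c - Llam lam) * (((k : ℝ) + 1) • TT lam c (k + 1))
      = Llam lam * TT lam c k := by
  ext n
  rw [mul_smul_comm, map_smul, smul_eq_mul, sub_mul, map_sub]
  simp only [TT]
  rw [PowerSeries.coeff_C_mul, PowerSeries.coeff_mk,
    coeff_mul_mkSum _ _ (constantCoeff_Llam lam) (dd c (k + 1)) (k + 1) n,
    coeff_mul_mkSum _ _ (constantCoeff_Llam lam) (dd c k) k n]
  simp only [← pow_succ']
  rw [sum_shift, sum_shift]
  rcases Nat.lt_or_ge n (k + 1) with h | h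
  · rw [Finset.Icc_eq_empty (show ¬ (k + 1 ≤ n) by omega),
      Finset.Icc_eq_empty (show ¬ (k + 1 + 1 ≤ n) by omega)]
    simp
  · have hins : Finset.Icc (k + 1) n = insert (k + 1) (Finset.Icc (k + 1 + 1) n) := by
      ext x; simp only [Finset.mem_Icc, Finset.mem_insert]; omega
    have hnot : (k + 1) ∉ Finset.Icc (k + 1 + 1) n := by
      simp only [Finset.mem_Icc]; omega
    rw [hins, Finset.sum_insert hnot, Finset.sum_insert hnot]
    rw [mul_sub, mul_add, mul_add, Finset.mul_sum, Finset.mul_sum, Finset.mul_sum,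
      add_sub_assoc, ← Finset.sum_sub_distrib]
    rw [show k + 1 - 1 = k from rfl]
    congr 1
    · linear_combination PowerSeries.coeff (R := ℝ) n (Llam lam ^ (k + 1)) * dd_i c hc k
    · refine Finset.sum_congr rfl fun j hj => ?_
      simp only [Finset.mem_Icc] at hj
      linear_combination PowerSeries.coeff (R := ℝ) n (Llam lam ^ j) * dd_ii c hc k j (by omega)

lemma TT_pow (lam c : ℝ) (hc : c ≠ 0) (k : ℕ) :
    (Llam lam * (PowerSeries.C (R := ℝ) c - Llam lam)⁻¹) ^ k
      = (k.factorial : ℝ) • TT lam c k := by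
  have hA : PowerSeries.constantCoeff (R := ℝ) (PowerSeries.C (R := ℝ) c - Llam lam) = c := by
    rw [map_sub, PowerSeries.constantCoeff_C, constantCoeff_Llam, sub_zero]
  have hAinv : (PowerSeries.C (R := ℝ) c - Llam lam)⁻¹ * (PowerSeries.C (R := ℝ) c - Llam lam) = 1 :=
    PowerSeries.inv_mul_cancel _ (by rw [hA]; exact hc)
  induction k with
  | zero =>
    have hTT0 : TT lam c 0 = 1 := by
      ext m
      rw [TT, PowerSeries.coeff_mk]
      rw [Finset.sum_eq_single 0 (fun b _ hb0 => by
        rw [dd, Nat.choose_eq_zero_of_lt (show b - 1 < b - 0 by omega)]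
        simp) (fun h0 => absurd (Finset.mem_Icc.mpr ⟨Nat.zero_le 0, Nat.zero_le m⟩) h0)]
      simp [dd]
    rw [pow_zero, hTT0]
    simp
  | succ k ih =>
    calc (Llam lam * (PowerSeries.C (R := ℝ) c - Llam lam)⁻¹) ^ (k + 1)
        = ((k.factorial : ℝ) • TT lam c k) * (Llam lam * (PowerSeries.C (R := ℝ) c - Llam lam)⁻¹) := by
          rw [pow_succ, ih]
      _ = (k.factorial : ℝ) • ((PowerSeries.C (R := ℝ) c - Llam lam)⁻¹ * (Llam lam * TT lam c k)) := by
          rw [smul_mul_assoc]; congr 1; ring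
      _ = (k.factorial : ℝ) • ((PowerSeries.C (R := ℝ) c - Llam lam)⁻¹ *
            ((PowerSeries.C (R := ℝ) c - Llam lam) * (((k : ℝ) + 1) • TT lam c (k + 1)))) := by
          rw [TT_key lam c hc k]
      _ = (k.factorial : ℝ) • (((k : ℝ) + 1) • TT lam c (k + 1)) := by
          rw [← mul_assoc, hAinv, one_mul]
      _ = ((k + 1).factorial : ℝ) • TT lam c (k + 1) := by
          rw [smul_smul]; congr 1; push_cast [Nat.factorial_succ]; ring

lemma part1 (α lam : ℝ) (hα : α ≠ 0) (hlam : lam ≠ 0) (n k : ℕ) (hkn : k ≤ n) :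
    cN n ((k.factorial : ℝ)⁻¹ •
        (Llam lam * (PowerSeries.C (R := ℝ) (α * lam) - Llam lam)⁻¹) ^ k)
      = ∑ j ∈ Finset.Icc k n,
          (j.choose k : ℝ) * ff ((j : ℝ) - 1) (j - k) * α⁻¹ ^ j * lam ^ (n - j) * S1 n j := by
  have hc : α * lam ≠ 0 := mul_ne_zero hα hlam
  rw [cN, TT_pow lam (α * lam) hc k, map_smul, smul_eq_mul, map_smul, smul_eq_mul,
    TT, PowerSeries.coeff_mk, Finset.mul_sum, Finset.mul_sum, Finset.mul_sum]
  refine Finset.sum_congr rfl fun j hj => ?_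
  simp only [Finset.mem_Icc] at hj
  rw [coeff_Llam_pow, dd, mul_inv, mul_pow,
    show lam ^ n = lam ^ (n - j) * lam ^ j from by rw [← pow_add]; congr 1; omega]
  have hkf : (k.factorial : ℝ) ≠ 0 := Nat.cast_ne_zero.mpr (Nat.factorial_ne_zero k)
  have e1 : (k.factorial : ℝ)⁻¹ * (k.factorial : ℝ) = 1 := inv_mul_cancel₀ hkf
  have e2 : lam⁻¹ ^ j * lam ^ j = 1 := by
    rw [← mul_pow, inv_mul_cancel₀ hlam, one_pow]
  have hLS1 := coeff_L_pow n j
  have hkey := keyid j k hj.1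
  calc (n.factorial : ℝ) *
      ((k.factorial : ℝ)⁻¹ *
        ((k.factorial : ℝ) *
          ((((j - 1).choose (j - k) : ℕ) : ℝ) * ((k.factorial : ℝ))⁻¹ * (α⁻¹ ^ j * lam⁻¹ ^ j) *
            ((lam ^ (n - j) * lam ^ j) * PowerSeries.coeff (R := ℝ) n (L ^ j)))))
      = ((((j - 1).choose (j - k) : ℕ) : ℝ) * ((k.factorial : ℝ))⁻¹)
          * (α⁻¹ ^ j * lam ^ (n - j)) * (lam⁻¹ ^ j * lam ^ j)
          * ((k.factorial : ℝ)⁻¹ * (k.factorial : ℝ))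
          * ((n.factorial : ℝ) * PowerSeries.coeff (R := ℝ) n (L ^ j)) := by ring
    _ = ((((j - 1).choose (j - k) : ℕ) : ℝ) * ((k.factorial : ℝ))⁻¹)
          * (α⁻¹ ^ j * lam ^ (n - j)) * 1 * 1 * ((j.factorial : ℝ) * S1 n j) := by
        rw [e1, e2, hLS1]
    _ = ((((j - 1).choose (j - k) : ℕ) : ℝ) * ((k.factorial : ℝ))⁻¹ * (j.factorial : ℝ))
          * (α⁻¹ ^ j * lam ^ (n - j)) * S1 n j := by ring
    _ = ((j.choose k : ℕ) : ℝ) * ff ((j : ℝ) - 1) (j - k) * α⁻¹ ^ j * lam ^ (n - j) * S1 n j := by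
        rw [hkey]; ring

theorem stmt11 (α lam : ℝ) (hα : 0 < α) (hlam : lam ≠ 0) (n k : ℕ) (hkn : k ≤ n) :
    cN n ((k.factorial : ℝ)⁻¹ •
        (Llam lam * (PowerSeries.C (R := ℝ) (α * lam) - Llam lam)⁻¹) ^ k)
        = ∑ j ∈ Finset.Icc k n,
            (j.choose k : ℝ) * ff ((j : ℝ) - 1) (j - k) * α⁻¹ ^ j * lam ^ (n - j) * S1 n j ∧
    cN n ((k.factorial : ℝ)⁻¹ •
        (lam⁻¹ • (pcomp (PowerSeries.exp ℝ)
          ((α * lam) • (PowerSeries.X * (1 + PowerSeries.X)⁻¹)) - 1)) ^ k)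
        = ∑ j ∈ Finset.Icc k n,
            (n.choose j : ℝ) * (-1 : ℝ) ^ (n - j) * ff ((n : ℝ) - 1) (n - j) * α ^ j *
              lam ^ (j - k) * S2 j k :=
  ⟨part1 α lam (ne_of_gt hα) hlam n k hkn, part2 α lam (ne_of_gt hα) hlam n k hkn⟩
end
end

section
/- Let α, β > 0 (gamma parameters). Set G := Σ_{n≥0} ⟨α⟩_n·β^{-n}·X^n/n! ∈ ℝ⟦X⟧, where ⟨α⟩_n := α(α+1)⋯(α+n-1) is the rising factorial with ⟨α⟩_0 := 1 (G is the binomial series of (1-X/β)^{-α}). Then for all natural numbers n ≥ k: c_n( (G-1)^k / k! ) = (1/(k!·β^n))·Σ_{j=0}^{k} binom(k,j)·(-1)^{k-j}·(αj+n-1)_n, where (αj+n-1)_n is the falling factorial of the real number αj+n-1 of length n. -/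
open PowerSeries Finset

noncomputable section

lemma ff_desc (y : ℝ) (m : ℕ) : ff y m = (descPochhammer ℤ m).smeval y := by
  induction m with
  | zero => simp [descPochhammer_zero, Polynomial.smeval_one, ff]
  | succ m ih =>
    rw [descPochhammer_succ_right, Polynomial.smeval_mul, ← ih]
    rw [ff, Finset.prod_range_succ, ← ff]
    simp [Polynomial.smeval_sub, Polynomial.smeval_X, Polynomial.smeval_natCast]

lemma ff_vandermonde (x y : ℝ) (n : ℕ) :
    ff (x + y) n = ∑ ij ∈ Finset.HasAntidiagonal.antidiagonal n,
      (n.choose ij.1 : ℝ) * (ff x ij.1 * ff y ij.2) := by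
  simp only [ff_desc]
  exact Ring.descPochhammer_smeval_add n (mul_comm x y)

lemma rf_eq_ff (y : ℝ) (m : ℕ) : rf y m = (-1 : ℝ) ^ m * ff (-y) m := by
  rw [rf, ff]
  have h : ∀ i ∈ Finset.range m, y + (i : ℝ) = (-1) * (-y - i) := fun i _ => by ring
  rw [Finset.prod_congr rfl h, Finset.prod_mul_distrib, Finset.prod_const, Finset.card_range]

lemma rf_vandermonde (x y : ℝ) (n : ℕ) :
    rf (x + y) n = ∑ ij ∈ Finset.HasAntidiagonal.antidiagonal n,
      (n.choose ij.1 : ℝ) * (rf x ij.1 * rf y ij.2) := by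
  rw [rf_eq_ff, show -(x + y) = -x + -y by ring, ff_vandermonde, Finset.mul_sum]
  refine Finset.sum_congr rfl fun ij hij => ?_
  rw [Finset.HasAntidiagonal.mem_antidiagonal] at hij
  rw [rf_eq_ff, rf_eq_ff, ← hij, pow_add]
  ring

def bser (b c : ℝ) : PowerSeries ℝ := PowerSeries.mk fun m => rf c m * b ^ m / m.factorial

lemma bser_mul (b c d : ℝ) : bser b c * bser b d = bser b (c + d) := by
  ext n
  rw [PowerSeries.coeff_mul]
  simp only [bser, PowerSeries.coeff_mk]
  rw [rf_vandermonde, Finset.sum_mul, Finset.sum_div]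
  refine Finset.sum_congr rfl fun ij hij => ?_
  rw [Finset.HasAntidiagonal.mem_antidiagonal] at hij
  obtain ⟨p, q⟩ := ij
  simp only at hij ⊢
  subst hij
  have h1 : ((p + q).choose p : ℝ) * p.factorial * q.factorial = (p + q).factorial := by
    have h0 := Nat.choose_mul_factorial_mul_factorial (Nat.le_add_right p q)
    rw [Nat.add_sub_cancel_left] at h0
    exact_mod_cast h0
  have h2 : (p.factorial : ℝ) ≠ 0 := Nat.cast_ne_zero.mpr (Nat.factorial_ne_zero _)
  have h3 : (q.factorial : ℝ) ≠ 0 := Nat.cast_ne_zero.mpr (Nat.factorial_ne_zero _)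
  have h4 : ((p + q).factorial : ℝ) ≠ 0 := Nat.cast_ne_zero.mpr (Nat.factorial_ne_zero _)
  rw [pow_add]
  field_simp
  rw [← h1]
  ring

lemma bser_zero (b : ℝ) : bser b 0 = 1 := by
  ext m
  simp only [bser, PowerSeries.coeff_mk, PowerSeries.coeff_one]
  cases m with
  | zero => simp [rf]
  | succ m =>
    rw [rf, Finset.prod_eq_zero (Finset.mem_range.mpr (Nat.succ_pos m)) (by norm_num)]
    simp

lemma bser_pow (b c : ℝ) (j : ℕ) : bser b c ^ j = bser b (j * c) := by
  induction j with
  | zero => simp [bser_zero]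
  | succ j ih =>
    rw [pow_succ, ih, bser_mul]
    norm_num
    ring_nf

lemma ff_shift (y : ℝ) (n : ℕ) : ff (y + n - 1) n = rf y n := by
  rw [ff, rf, ← Finset.prod_range_reflect]
  refine Finset.prod_congr rfl fun i hi => ?_
  rw [Finset.mem_range] at hi
  have : ((n - 1 - i : ℕ) : ℝ) = (n : ℝ) - 1 - i := by
    have h1 : (1:ℕ) ≤ n := by omega
    have h2 : i ≤ n - 1 := by omega
    push_cast [Nat.cast_sub h2, Nat.cast_sub h1]
    ring
  rw [this]
  ring

theorem stmt12 (α β : ℝ) (hα : 0 < α) (hβ : 0 < β) (n k : ℕ) (hkn : k ≤ n) :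
    cN n ((k.factorial : ℝ)⁻¹ •
        ((PowerSeries.mk fun m => rf α m * β⁻¹ ^ m / m.factorial) - 1) ^ k)
      = 1 / ((k.factorial : ℝ) * β ^ n) *
          ∑ j ∈ Finset.range (k + 1),
            (k.choose j : ℝ) * (-1) ^ (k - j) * ff (α * j + n - 1) n := by
  have hG : (PowerSeries.mk fun m => rf α m * β⁻¹ ^ m / m.factorial) = bser β⁻¹ α := rfl
  have hcoeff : ∀ j : ℕ, PowerSeries.coeff (R := ℝ) n ((bser β⁻¹ α) ^ j)
      = rf (j * α) n * β⁻¹ ^ n / n.factorial := by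
    intro j
    rw [bser_pow]
    simp [bser]
  have key : ∀ m ∈ Finset.range (k + 1),
      PowerSeries.coeff (R := ℝ) n ((-1 : PowerSeries ℝ) ^ (m + k) * (bser β⁻¹ α) ^ m * 1 ^ (k - m)
        * ((k.choose m : ℕ) : PowerSeries ℝ))
      = (-1 : ℝ) ^ (k - m) * (rf (α * m) n * β⁻¹ ^ n / n.factorial) * k.choose m := by
    intro m hm
    rw [Finset.mem_range] at hm
    have hc1 : ((-1 : PowerSeries ℝ) ^ (m + k)) = PowerSeries.C (R := ℝ) ((-1 : ℝ) ^ (m + k)) := by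
      rw [map_pow, map_neg, map_one]
    have hc2 : PowerSeries.C (R := ℝ) ((k.choose m : ℝ)) = ((k.choose m : ℕ) : PowerSeries ℝ) :=
      map_natCast _ _
    rw [one_pow, mul_one, hc1, ← hc2, mul_assoc, PowerSeries.coeff_C_mul,
      PowerSeries.coeff_mul_C, hcoeff m]
    rw [show (-1 : ℝ) ^ (m + k) = (-1) ^ (k - m) by
      rw [show m + k = (k - m) + 2 * m by omega, pow_add, pow_mul]; simp]
    rw [mul_comm (m : ℝ) α]
    ring
  rw [hG, sub_pow, cN, PowerSeries.coeff_smul, map_sum, Finset.sum_congr rfl key,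
    smul_eq_mul, Finset.mul_sum, Finset.mul_sum, Finset.mul_sum]
  refine Finset.sum_congr rfl fun m hm => ?_
  rw [ff_shift]
  have h4 : (n.factorial : ℝ) ≠ 0 := Nat.cast_ne_zero.mpr (Nat.factorial_ne_zero _)
  have h5 : (k.factorial : ℝ) ≠ 0 := Nat.cast_ne_zero.mpr (Nat.factorial_ne_zero _)
  have h6 : (β : ℝ) ≠ 0 := ne_of_gt hβ
  field_simp
  rw [mul_right_comm _ _ (β ^ n), mul_assoc (rf _ _), ← mul_pow, one_div, inv_mul_cancel₀ h6,
    one_pow, mul_one]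
end
end

section
/- Let G ∈ ℝ⟦X⟧ have constant coefficient 1 and nonzero coefficient of X; set f := G - 1 (a delta series), and let g ∈ ℝ⟦X⟧ have zero constant coefficient with f∘g = X and g∘f = X. Define S₁^Y(n,k) := c_n(g^k/k!), and for x ∈ ℝ define the probabilistic Euler polynomials E_n^Y(x) := c_n( 2·(G+1)^{-1}·( Exp∘( x·(L∘f) ) ) ) (the series G+1 has invertible constant coefficient 2, and L∘f is the formal logarithm of G). Let n ∈ ℕ, let q : ℝ → ℝ be a polynomial function of degree at most n, and let a_0, …, a_n ∈ ℝ satisfy q(x) = Σ_{r=0}^{n} a_r·E_r^Y(x) for all x ∈ ℝ. Then for each 0 ≤ r ≤ n: a_r = (1/2)·Σ_{j=r}^{n} S₁^Y(j,r)·(1/j!)·( (Δ^j q)(1) + (Δ^j q)(0) ) = (1/2)·Σ_{j=r}^{n} Σ_{i=0}^{j} (-1)^{j-i}·(1/j!)·binom(j,i)·S₁^Y(j,r)·( q(i+1) + q(i) ). -/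
open PowerSeries Finset

noncomputable section

/-- Probabilistic Stirling numbers of the first kind associated with `g`. -/
def S1Y (g : PowerSeries ℝ) (n k : ℕ) : ℝ := cN n ((k.factorial : ℝ)⁻¹ • g ^ k)

/-- Probabilistic Euler polynomials: `E_n^Y(x) = c_n( 2·(G+1)⁻¹·Exp∘(x·(L∘(G-1))) )`. -/
def EY (G : PowerSeries ℝ) (n : ℕ) (x : ℝ) : ℝ :=
  cN n (2 * (G + 1)⁻¹ * pcomp (PowerSeries.exp ℝ) (x • pcomp L (G - 1)))

/-- Forward difference operator. -/
def fwd (q : ℝ → ℝ) : ℝ → ℝ := fun x => q (x + 1) - q x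

namespace PC

variable {F F₁ F₂ G H : PowerSeries ℝ}

lemma coeff_pow_eq_zero (hG : PowerSeries.coeff (R := ℝ) 0 G = 0) {i k : ℕ} (h : i < k) :
    PowerSeries.coeff (R := ℝ) i (G ^ k) = 0 := by
  have hX : (PowerSeries.X : PowerSeries ℝ) ∣ G := by
    rw [PowerSeries.X_dvd_iff]; simpa using hG
  exact (PowerSeries.X_pow_dvd_iff.mp (pow_dvd_pow_of_dvd hX k)) i h

lemma coeff_pcomp (F G : PowerSeries ℝ) (n : ℕ) :
    PowerSeries.coeff (R := ℝ) n (pcomp F G)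
      = ∑ k ∈ Finset.range (n + 1), (PowerSeries.coeff (R := ℝ) k F) * (PowerSeries.coeff (R := ℝ) n (G ^ k)) := by
  simp [pcomp]

lemma coeff_eval₂ (hG : PowerSeries.coeff (R := ℝ) 0 G = 0) (P : Polynomial ℝ) (n : ℕ) :
    PowerSeries.coeff (R := ℝ) n (Polynomial.eval₂ (PowerSeries.C (R := ℝ)) G P)
      = ∑ i ∈ Finset.range (n + 1), P.coeff i * PowerSeries.coeff (R := ℝ) n (G ^ i) := by
  have hd : P.natDegree < max (P.natDegree + 1) (n + 1) := lt_of_lt_of_le (Nat.lt_succ_self _) (le_max_left _ _)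
  rw [Polynomial.eval₂_eq_sum_range' _ hd, map_sum]
  refine (Finset.sum_subset (Finset.range_subset_range.mpr (le_max_right _ _)) ?_).symm.trans ?_
  · intro i _ hi
    have : n < i := by simpa using hi
    rw [PowerSeries.coeff_C_mul, coeff_pow_eq_zero hG this, mul_zero]
  · exact Finset.sum_congr rfl fun i _ => by rw [PowerSeries.coeff_C_mul]

lemma coeff_pcomp_eq_eval₂ (hG : PowerSeries.coeff (R := ℝ) 0 G = 0) (F : PowerSeries ℝ) {m n : ℕ}
    (hmn : m ≤ n) :
    PowerSeries.coeff (R := ℝ) m (pcomp F G)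
      = PowerSeries.coeff (R := ℝ) m (Polynomial.eval₂ (PowerSeries.C (R := ℝ)) G (PowerSeries.trunc (n + 1) F)) := by
  rw [coeff_pcomp, coeff_eval₂ hG]
  refine Finset.sum_congr rfl fun i hi => ?_
  rw [PowerSeries.coeff_trunc, if_pos]
  have : i ≤ m := by simpa [Nat.lt_succ_iff] using hi
  omega

lemma pcomp_C (a : ℝ) (G : PowerSeries ℝ) : pcomp (PowerSeries.C (R := ℝ) a) G = PowerSeries.C (R := ℝ) a := by
  ext n
  rw [coeff_pcomp, Finset.sum_eq_single 0]
  · simp [PowerSeries.coeff_one, PowerSeries.coeff_C]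
  · intro b _ hb; simp [PowerSeries.coeff_C, hb]
  · simp

lemma pcomp_one (G : PowerSeries ℝ) : pcomp 1 G = 1 := by
  simpa using pcomp_C 1 G

lemma pcomp_zero (G : PowerSeries ℝ) : pcomp 0 G = 0 := by
  ext n; simp [coeff_pcomp]

lemma pcomp_add (F₁ F₂ G : PowerSeries ℝ) : pcomp (F₁ + F₂) G = pcomp F₁ G + pcomp F₂ G := by
  ext n; simp [coeff_pcomp, add_mul, Finset.sum_add_distrib]

lemma pcomp_smul (c : ℝ) (F G : PowerSeries ℝ) : pcomp (c • F) G = c • pcomp F G := by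
  ext n; simp [coeff_pcomp, Finset.mul_sum, mul_assoc]

lemma pcomp_X (hG : PowerSeries.coeff (R := ℝ) 0 G = 0) : pcomp PowerSeries.X G = G := by
  ext n
  rw [coeff_pcomp, Finset.sum_eq_single 1]
  · simp
  · intro b _ hb; simp [PowerSeries.coeff_X, hb]
  · intro h1
    have : n = 0 := by simpa [Nat.lt_succ_iff] using h1
    subst this
    simp [hG]

lemma coeff_trunc_mul (F₁ F₂ : PowerSeries ℝ) {i n : ℕ} (hi : i ≤ n) :
    (PowerSeries.trunc (n + 1) F₁ * PowerSeries.trunc (n + 1) F₂).coeff i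
      = PowerSeries.coeff (R := ℝ) i (F₁ * F₂) := by
  rw [Polynomial.coeff_mul, PowerSeries.coeff_mul]
  refine Finset.sum_congr rfl fun p hp => ?_
  have h := Finset.HasAntidiagonal.mem_antidiagonal.mp hp
  rw [PowerSeries.coeff_trunc, PowerSeries.coeff_trunc, if_pos (by omega), if_pos (by omega)]

lemma pcomp_mul (hG : PowerSeries.coeff (R := ℝ) 0 G = 0) (F₁ F₂ : PowerSeries ℝ) :
    pcomp (F₁ * F₂) G = pcomp F₁ G * pcomp F₂ G := by
  ext n
  rw [PowerSeries.coeff_mul]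
  have h1 : ∀ p ∈ Finset.HasAntidiagonal.antidiagonal n,
      (PowerSeries.coeff (R := ℝ) p.1 (pcomp F₁ G)) * (PowerSeries.coeff (R := ℝ) p.2 (pcomp F₂ G))
        = (PowerSeries.coeff (R := ℝ) p.1 (Polynomial.eval₂ (PowerSeries.C (R := ℝ)) G (PowerSeries.trunc (n+1) F₁)))
          * (PowerSeries.coeff (R := ℝ) p.2 (Polynomial.eval₂ (PowerSeries.C (R := ℝ)) G (PowerSeries.trunc (n+1) F₂))) := by
    intro p hp
    have h := Finset.HasAntidiagonal.mem_antidiagonal.mp hp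
    rw [coeff_pcomp_eq_eval₂ hG F₁ (show p.1 ≤ n by omega),
        coeff_pcomp_eq_eval₂ hG F₂ (show p.2 ≤ n by omega)]
  rw [Finset.sum_congr rfl h1, ← PowerSeries.coeff_mul, ← Polynomial.eval₂_mul,
    coeff_eval₂ hG, coeff_pcomp]
  exact Finset.sum_congr rfl fun i hi =>
    by rw [coeff_trunc_mul F₁ F₂ (by simpa [Nat.lt_succ_iff] using hi)]

lemma pcomp_pow (hG : PowerSeries.coeff (R := ℝ) 0 G = 0) (F : PowerSeries ℝ) (k : ℕ) :
    pcomp (F ^ k) G = (pcomp F G) ^ k := by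
  induction k with
  | zero => simpa using pcomp_one G
  | succ k ih => rw [pow_succ, pcomp_mul hG, ih, pow_succ]

def pcompHom (hG : PowerSeries.coeff (R := ℝ) 0 G = 0) : PowerSeries ℝ →+* PowerSeries ℝ where
  toFun F := pcomp F G
  map_one' := pcomp_one G
  map_mul' := pcomp_mul hG
  map_zero' := pcomp_zero G
  map_add' := pcomp_add (G := G)

lemma pcomp_eval₂ (hH : PowerSeries.coeff (R := ℝ) 0 H = 0) (P : Polynomial ℝ) (G : PowerSeries ℝ) :
    pcomp (Polynomial.eval₂ (PowerSeries.C (R := ℝ)) G P) H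
      = Polynomial.eval₂ (PowerSeries.C (R := ℝ)) (pcomp G H) P := by
  have := Polynomial.hom_eval₂ P (PowerSeries.C (R := ℝ)) (pcompHom hH) G
  have hc : (pcompHom hH).comp (PowerSeries.C (R := ℝ)) = PowerSeries.C (R := ℝ) :=
    RingHom.ext fun a => pcomp_C a H
  rw [hc] at this
  exact this

lemma constantCoeff_pcomp (F G : PowerSeries ℝ) :
    PowerSeries.coeff (R := ℝ) 0 (pcomp F G) = PowerSeries.coeff (R := ℝ) 0 F := by
  rw [coeff_pcomp]; simp

lemma pcomp_assoc (hG : PowerSeries.coeff (R := ℝ) 0 G = 0) (hH : PowerSeries.coeff (R := ℝ) 0 H = 0)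
    (F : PowerSeries ℝ) :
    pcomp (pcomp F G) H = pcomp F (pcomp G H) := by
  have hGH : PowerSeries.coeff (R := ℝ) 0 (pcomp G H) = 0 := by rw [constantCoeff_pcomp]; exact hG
  ext n
  rw [coeff_pcomp (pcomp F G) H]
  have h1 : ∀ k ∈ Finset.range (n+1),
      PowerSeries.coeff (R := ℝ) k (pcomp F G) * PowerSeries.coeff (R := ℝ) n (H ^ k)
        = PowerSeries.coeff (R := ℝ) k (Polynomial.eval₂ (PowerSeries.C (R := ℝ)) G (PowerSeries.trunc (n+1) F))
            * PowerSeries.coeff (R := ℝ) n (H ^ k) := by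
    intro k hk
    rw [coeff_pcomp_eq_eval₂ hG F (show k ≤ n by simpa [Nat.lt_succ_iff] using hk)]
  rw [Finset.sum_congr rfl h1, ← coeff_pcomp, pcomp_eval₂ hH]
  exact (coeff_pcomp_eq_eval₂ hGH F (le_refl n)).symm

-- polynomial chain rule
lemma derivative_eval₂ (P : Polynomial ℝ) (G : PowerSeries ℝ) :
    PowerSeries.derivative ℝ (Polynomial.eval₂ (PowerSeries.C (R := ℝ)) G P)
      = Polynomial.eval₂ (PowerSeries.C (R := ℝ)) G (Polynomial.derivative P) * PowerSeries.derivative ℝ G := by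
  induction P using Polynomial.induction_on' with
  | add p q hp hq => simp [Polynomial.eval₂_add, hp, hq, add_mul]
  | monomial k a =>
    rw [Polynomial.eval₂_monomial, Polynomial.derivative_monomial, Polynomial.eval₂_monomial]
    rw [Derivation.leibniz, Derivation.leibniz_pow]
    simp only [PowerSeries.derivative_C, smul_zero, add_zero, smul_eq_mul, smul_smul]
    push_cast
    rw [map_mul (PowerSeries.C (R := ℝ)), map_natCast (PowerSeries.C (R := ℝ))]
    ring

lemma trunc_derivative_eq (F : PowerSeries ℝ) (n : ℕ) :
    Polynomial.derivative (PowerSeries.trunc (n + 2) F)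
      = PowerSeries.trunc (n + 1) (PowerSeries.derivative ℝ F) := by
  ext k
  rw [Polynomial.coeff_derivative, PowerSeries.coeff_trunc, PowerSeries.coeff_trunc,
    PowerSeries.coeff_derivative]
  by_cases hk : k < n + 1
  · rw [if_pos hk, if_pos (by omega)]
  · rw [if_neg hk, if_neg (by omega)]
    simp

lemma pcomp_derivative (hG : PowerSeries.coeff (R := ℝ) 0 G = 0) (F : PowerSeries ℝ) :
    PowerSeries.derivative ℝ (pcomp F G)
      = pcomp (PowerSeries.derivative ℝ F) G * PowerSeries.derivative ℝ G := by
  ext n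
  rw [PowerSeries.coeff_derivative, coeff_pcomp_eq_eval₂ hG F (le_refl (n+1)),
    ← PowerSeries.coeff_derivative, derivative_eval₂, trunc_derivative_eq,
    PowerSeries.coeff_mul, PowerSeries.coeff_mul]
  refine Finset.sum_congr rfl fun p hp => ?_
  have h := Finset.HasAntidiagonal.mem_antidiagonal.mp hp
  rw [← coeff_pcomp_eq_eval₂ hG (PowerSeries.derivative ℝ F) (show p.1 ≤ n by omega)]

-- derivative of exp
lemma derivative_exp : PowerSeries.derivative ℝ (PowerSeries.exp ℝ) = PowerSeries.exp ℝ := by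
  ext n
  rw [PowerSeries.coeff_derivative, PowerSeries.coeff_exp, PowerSeries.coeff_exp]
  have : ((n+1).factorial : ℝ) = (n+1) * n.factorial := by
    push_cast [Nat.factorial_succ]; ring
  have h1 : (n.factorial : ℝ) ≠ 0 := Nat.cast_ne_zero.mpr n.factorial_ne_zero
  have h2 : ((n:ℝ)+1) ≠ 0 := by positivity
  simp only [eq_ratCast, Rat.cast_div, Rat.cast_one, Rat.cast_natCast]
  rw [this]
  field_simp

-- coefficient facts about L
lemma coeff_L (n : ℕ) : PowerSeries.coeff (R := ℝ) n L = if n = 0 then 0 else (-1 : ℝ) ^ (n - 1) / n := by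
  simp [L]

lemma coeff_derivative_L (n : ℕ) : PowerSeries.coeff (R := ℝ) n (PowerSeries.derivative ℝ L) = (-1 : ℝ) ^ n := by
  rw [PowerSeries.coeff_derivative, coeff_L]
  have h2 : ((n:ℝ)+1) ≠ 0 := by positivity
  simp only [Nat.succ_ne_zero, if_false, Nat.add_sub_cancel]
  push_cast
  field_simp

lemma one_add_X_mul_dL : (1 + PowerSeries.X) * PowerSeries.derivative ℝ L = 1 := by
  ext n
  rw [add_mul, one_mul, map_add]
  cases n with
  | zero =>
    rw [coeff_derivative_L]
    simp
  | succ m =>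
    rw [coeff_derivative_L, PowerSeries.coeff_succ_X_mul, coeff_derivative_L]
    simp [pow_succ]

lemma coeff_zero_smul_L (x : ℝ) : PowerSeries.coeff (R := ℝ) 0 (x • L) = 0 := by
  rw [PowerSeries.coeff_smul, coeff_L]; simp

lemma ff_succ (x : ℝ) (n : ℕ) : ff x (n + 1) = ff x n * (x - n) := Finset.prod_range_succ _ _

lemma ff_shift (x : ℝ) (n : ℕ) : ff (x + 1) (n + 1) = (x + 1) * ff x n := by
  rw [ff, Finset.prod_range_succ']
  simp only [Nat.cast_zero, sub_zero, Nat.cast_add, Nat.cast_one]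
  rw [mul_comm]
  congr 1
  exact Finset.prod_congr rfl fun i _ => by push_cast; ring

/-- coefficient of the binomial series -/
lemma coeff_B (x : ℝ) (n : ℕ) :
    PowerSeries.coeff (R := ℝ) n (pcomp (PowerSeries.exp ℝ) (x • L)) = ff x n / n.factorial := by
  set B := pcomp (PowerSeries.exp ℝ) (x • L) with hBdef
  have hB0 : PowerSeries.coeff (R := ℝ) 0 B = 1 := by
    rw [hBdef, constantCoeff_pcomp, PowerSeries.coeff_exp]
    simp
  have hODE : (1 + PowerSeries.X) * PowerSeries.derivative ℝ B = x • B := by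
    have hstep : ∀ u : PowerSeries ℝ,
        (1 + PowerSeries.X) * (u * (x • PowerSeries.derivative ℝ L)) = x • u := by
      intro u
      rw [PowerSeries.smul_eq_C_mul, PowerSeries.smul_eq_C_mul]
      calc (1 + PowerSeries.X) * (u * (PowerSeries.C (R := ℝ) x * PowerSeries.derivative ℝ L))
          = PowerSeries.C (R := ℝ) x * (u * ((1 + PowerSeries.X) * PowerSeries.derivative ℝ L)) := by ring
        _ = PowerSeries.C (R := ℝ) x * u := by rw [one_add_X_mul_dL, mul_one]
    rw [hBdef, pcomp_derivative (coeff_zero_smul_L x), derivative_exp, Derivation.map_smul]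
    exact hstep _
  have hrec : ∀ m : ℕ, ((m:ℝ) + 1) * PowerSeries.coeff (R := ℝ) (m+1) B = (x - m) * PowerSeries.coeff (R := ℝ) m B := by
    intro m
    have := congrArg (PowerSeries.coeff (R := ℝ) m) hODE
    rw [add_mul, one_mul, map_add, PowerSeries.coeff_smul, PowerSeries.coeff_derivative] at this
    have hXd : PowerSeries.coeff (R := ℝ) m (PowerSeries.X * PowerSeries.derivative ℝ B)
        = (m : ℝ) * PowerSeries.coeff (R := ℝ) m B := by
      cases m with
      | zero => simp
      | succ p =>
        rw [PowerSeries.coeff_succ_X_mul, PowerSeries.coeff_derivative]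
        push_cast; ring
    rw [hXd, smul_eq_mul] at this
    push_cast at this ⊢
    linarith [this]
  induction n with
  | zero => simpa [ff] using hB0
  | succ m ih =>
    have h := hrec m
    rw [ih] at h
    have hm1 : ((m:ℝ) + 1) ≠ 0 := by positivity
    have hfac : (m.factorial : ℝ) ≠ 0 := Nat.cast_ne_zero.mpr m.factorial_ne_zero
    have : PowerSeries.coeff (R := ℝ) (m+1) B = (x - m) * (ff x m / m.factorial) / ((m:ℝ)+1) := by
      field_simp at h ⊢; linarith [h]
    rw [this, ff_succ]
    rw [Nat.factorial_succ]
    push_cast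
    field_simp

lemma B_one : pcomp (PowerSeries.exp ℝ) ((1:ℝ) • L) = 1 + PowerSeries.X := by
  ext n
  rw [coeff_B, map_add]
  match n with
  | 0 => simp [ff]
  | 1 => simp [ff]
  | (m+2) =>
    have : ff 1 (m+2) = 0 := by
      apply Finset.prod_eq_zero (Finset.mem_range.mpr (show 1 < m+2 by omega))
      simp
    rw [this]
    rw [PowerSeries.coeff_X]
    simp [PowerSeries.coeff_one]

lemma B_zero : pcomp (PowerSeries.exp ℝ) ((0:ℝ) • L) = 1 := by
  ext n
  rw [coeff_B]
  match n with
  | 0 => simp [ff]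
  | (m+1) =>
    have : ff 0 (m+1) = 0 := by
      apply Finset.prod_eq_zero (Finset.mem_range.mpr (show 0 < m+1 by omega))
      simp
    rw [this]
    simp [PowerSeries.coeff_one]

lemma B_shift (x : ℝ) :
    pcomp (PowerSeries.exp ℝ) ((x + 1) • L)
      = pcomp (PowerSeries.exp ℝ) (x • L) * (1 + PowerSeries.X) := by
  ext n
  rw [coeff_B, mul_add, mul_one, map_add, coeff_B]
  match n with
  | 0 =>
    have : PowerSeries.coeff (R := ℝ) 0 (pcomp (PowerSeries.exp ℝ) (x • L) * PowerSeries.X) = 0 := by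
      rw [PowerSeries.coeff_zero_eq_constantCoeff, map_mul]
      simp
    rw [this]
    simp [ff]
  | (m+1) =>
    have hX : PowerSeries.coeff (R := ℝ) (m+1) (pcomp (PowerSeries.exp ℝ) (x • L) * PowerSeries.X)
        = ff x m / m.factorial := by
      rw [mul_comm, PowerSeries.coeff_succ_X_mul, coeff_B]
    rw [hX, ff_shift, ff_succ]
    have hm1 : ((m:ℝ) + 1) ≠ 0 := by positivity
    have hfac : (m.factorial : ℝ) ≠ 0 := Nat.cast_ne_zero.mpr m.factorial_ne_zero
    rw [Nat.factorial_succ]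
    push_cast
    field_simp
    ring


variable {f : PowerSeries ℝ}

lemma H_repr (hf : PowerSeries.coeff (R := ℝ) 0 f = 0) (x : ℝ) :
    pcomp (PowerSeries.exp ℝ) (x • pcomp L f)
      = pcomp (pcomp (PowerSeries.exp ℝ) (x • L)) f := by
  rw [pcomp_assoc (coeff_zero_smul_L x) hf, pcomp_smul]

lemma H_one (hf : PowerSeries.coeff (R := ℝ) 0 f = 0) :
    pcomp (PowerSeries.exp ℝ) ((1:ℝ) • pcomp L f) = 1 + f := by
  rw [H_repr hf, B_one, pcomp_add, pcomp_one, pcomp_X hf]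

lemma H_zero (hf : PowerSeries.coeff (R := ℝ) 0 f = 0) :
    pcomp (PowerSeries.exp ℝ) ((0:ℝ) • pcomp L f) = 1 := by
  rw [H_repr hf, B_zero, pcomp_one]

lemma H_shift (hf : PowerSeries.coeff (R := ℝ) 0 f = 0) (x : ℝ) :
    pcomp (PowerSeries.exp ℝ) ((x + 1) • pcomp L f)
      = pcomp (PowerSeries.exp ℝ) (x • pcomp L f) * (1 + f) := by
  rw [H_repr hf, H_repr hf, B_shift, pcomp_mul hf, pcomp_add, pcomp_one, pcomp_X hf]

end PC

theorem stmt19 (G g : PowerSeries ℝ)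
    (hG0 : PowerSeries.coeff (R := ℝ) 0 G = 1) (hG1 : PowerSeries.coeff (R := ℝ) 1 G ≠ 0)
    (hg0 : PowerSeries.coeff (R := ℝ) 0 g = 0)
    (hfg : pcomp (G - 1) g = PowerSeries.X) (hgf : pcomp g (G - 1) = PowerSeries.X)
    (n : ℕ) (q : ℝ → ℝ) (Q : Polynomial ℝ) (hqQ : ∀ x, q x = Q.eval x)
    (hdeg : Q.natDegree ≤ n) (a : ℕ → ℝ)
    (ha : ∀ x : ℝ, q x = ∑ r ∈ Finset.range (n + 1), a r * EY G r x) :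
    ∀ r : ℕ, r ≤ n →
      a r = (1 / 2) * ∑ j ∈ Finset.Icc r n,
          S1Y g j r * (j.factorial : ℝ)⁻¹ * ((fwd^[j] q) 1 + (fwd^[j] q) 0) ∧
      a r = (1 / 2) * ∑ j ∈ Finset.Icc r n, ∑ i ∈ Finset.range (j + 1),
          (-1 : ℝ) ^ (j - i) * (j.factorial : ℝ)⁻¹ * (j.choose i : ℝ) * S1Y g j r *
            (q ((i : ℝ) + 1) + q i) := by

  intro r hr
  have hf : PowerSeries.coeff (R := ℝ) 0 (G - 1) = 0 := by
    rw [map_sub]; simp [hG0]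
  have hcN_sub : ∀ (s : ℕ) (A B : PowerSeries ℝ), cN s A - cN s B = cN s (A - B) := by
    intro s A B; simp [cN, map_sub]; ring
  have hcN_add : ∀ (s : ℕ) (A B : PowerSeries ℝ), cN s A + cN s B = cN s (A + B) := by
    intro s A B; simp [cN, map_add]; ring
  have hcN_two : ∀ (s : ℕ) (A : PowerSeries ℝ), cN s ((2 : PowerSeries ℝ) * A) = 2 * cN s A := by
    intro s A
    have h2 : (2 : PowerSeries ℝ) = PowerSeries.C (R := ℝ) 2 := by
      rw [← map_ofNat (PowerSeries.C (R := ℝ)) 2]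
    rw [cN, h2, PowerSeries.coeff_C_mul, cN]; ring
  -- Step 1: iterated forward differences of q
  have key1 : ∀ (j : ℕ) (x : ℝ), (fwd^[j] q) x
      = ∑ s ∈ Finset.range (n+1), a s *
          cN s (2 * (G + 1)⁻¹ * pcomp (PowerSeries.exp ℝ) (x • pcomp L (G - 1)) * (G - 1) ^ j) := by
    intro j
    induction j with
    | zero =>
      intro x
      simpa only [Function.iterate_zero_apply, pow_zero, mul_one, EY] using ha x
    | succ j ih =>
      intro x
      rw [Function.iterate_succ_apply']
      show (fwd^[j] q) (x + 1) - (fwd^[j] q) x = _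
      rw [ih (x+1), ih x, ← Finset.sum_sub_distrib]
      refine Finset.sum_congr rfl fun s _ => ?_
      rw [← mul_sub, hcN_sub]
      congr 2
      rw [PC.H_shift hf x]
      have h1G : (1 : PowerSeries ℝ) + (G - 1) = G := by ring
      rw [h1G]
      ring
  -- Step 2
  have key2 : ∀ j : ℕ, (fwd^[j] q) 1 + (fwd^[j] q) 0
      = ∑ s ∈ Finset.range (n+1), a s * (2 * cN s ((G - 1) ^ j)) := by
    intro j
    rw [key1 j 1, key1 j 0, ← Finset.sum_add_distrib]
    refine Finset.sum_congr rfl fun s _ => ?_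
    rw [← mul_add, hcN_add]
    congr 1
    have hA : 2 * (G + 1)⁻¹ * pcomp (PowerSeries.exp ℝ) ((1:ℝ) • pcomp L (G - 1)) * (G - 1) ^ j
        + 2 * (G + 1)⁻¹ * pcomp (PowerSeries.exp ℝ) ((0:ℝ) • pcomp L (G - 1)) * (G - 1) ^ j
        = (2 : PowerSeries ℝ) * (G - 1) ^ j := by
      rw [PC.H_one hf, PC.H_zero hf]
      have h1G : (1 : PowerSeries ℝ) + (G - 1) = G := by ring
      rw [h1G]
      have hcc : PowerSeries.constantCoeff (R := ℝ) (G + 1) ≠ 0 := by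
        have : PowerSeries.constantCoeff (R := ℝ) (G + 1) = 2 := by
          rw [map_add, map_one, ← PowerSeries.coeff_zero_eq_constantCoeff_apply, hG0]; norm_num
        rw [this]; norm_num
      have hinv := PowerSeries.inv_mul_cancel (G + 1) hcc
      calc 2 * (G + 1)⁻¹ * G * (G - 1) ^ j + 2 * (G + 1)⁻¹ * 1 * (G - 1) ^ j
          = 2 * ((G + 1)⁻¹ * (G + 1)) * (G - 1) ^ j := by ring
        _ = (2 : PowerSeries ℝ) * (G - 1) ^ j := by rw [hinv]; ring
    rw [hA, hcN_two]
  -- Step 3: Kronecker delta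
  have hcomp : pcomp ((r.factorial : ℝ)⁻¹ • g ^ r) (G - 1)
      = (r.factorial : ℝ)⁻¹ • PowerSeries.X ^ r := by
    rw [PC.pcomp_smul, PC.pcomp_pow hf, hgf]
  have key3 : ∀ s, s ≤ n →
      (s.factorial : ℝ) * ∑ j ∈ Finset.Icc r n,
        (j.factorial : ℝ)⁻¹ * S1Y g j r * PowerSeries.coeff (R := ℝ) s ((G - 1) ^ j)
      = (if s = r then 1 else 0) := by
    intro s hs
    have h1 : ∀ j : ℕ, (j.factorial : ℝ)⁻¹ * S1Y g j r
        = PowerSeries.coeff (R := ℝ) j ((r.factorial : ℝ)⁻¹ • g ^ r) := by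
      intro j
      rw [S1Y, cN, inv_mul_cancel_left₀ (Nat.cast_ne_zero.mpr j.factorial_ne_zero)]
    have h2 : ∑ j ∈ Finset.Icc r n,
          PowerSeries.coeff (R := ℝ) j ((r.factorial : ℝ)⁻¹ • g ^ r) * PowerSeries.coeff (R := ℝ) s ((G - 1) ^ j)
        = ∑ j ∈ Finset.range (n+1),
          PowerSeries.coeff (R := ℝ) j ((r.factorial : ℝ)⁻¹ • g ^ r) * PowerSeries.coeff (R := ℝ) s ((G - 1) ^ j) := by
      apply Finset.sum_subset
      · intro j hj
        rw [Finset.mem_Icc] at hj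
        rw [Finset.mem_range]
        omega
      · intro j hj hj2
        rw [Finset.mem_range] at hj
        rw [Finset.mem_Icc] at hj2
        have hjr : j < r := by omega
        rw [PowerSeries.coeff_smul, PC.coeff_pow_eq_zero hg0 hjr]
        simp
    have h3 : ∑ j ∈ Finset.range (s+1),
          PowerSeries.coeff (R := ℝ) j ((r.factorial : ℝ)⁻¹ • g ^ r) * PowerSeries.coeff (R := ℝ) s ((G - 1) ^ j)
        = ∑ j ∈ Finset.range (n+1),
          PowerSeries.coeff (R := ℝ) j ((r.factorial : ℝ)⁻¹ • g ^ r) * PowerSeries.coeff (R := ℝ) s ((G - 1) ^ j) := by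
      apply Finset.sum_subset (Finset.range_subset_range.mpr (by omega))
      intro j hj hj2
      rw [Finset.mem_range] at hj hj2
      have hsj : s < j := by omega
      rw [PC.coeff_pow_eq_zero hf hsj, mul_zero]
    calc (s.factorial : ℝ) * ∑ j ∈ Finset.Icc r n,
          (j.factorial : ℝ)⁻¹ * S1Y g j r * PowerSeries.coeff (R := ℝ) s ((G - 1) ^ j)
        = (s.factorial : ℝ) * ∑ j ∈ Finset.range (s+1),
            PowerSeries.coeff (R := ℝ) j ((r.factorial : ℝ)⁻¹ • g ^ r) * PowerSeries.coeff (R := ℝ) s ((G - 1) ^ j) := by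
          rw [Finset.sum_congr rfl (fun j _ => by rw [h1 j]), h2, ← h3]
      _ = (s.factorial : ℝ) * PowerSeries.coeff (R := ℝ) s ((r.factorial : ℝ)⁻¹ • PowerSeries.X ^ r) := by
          rw [← PC.coeff_pcomp, hcomp]
      _ = (if s = r then 1 else 0) := by
          rw [PowerSeries.coeff_smul, PowerSeries.coeff_X_pow]
          by_cases hsr : s = r
          · subst hsr
            have hne : (s.factorial : ℝ) ≠ 0 := Nat.cast_ne_zero.mpr s.factorial_ne_zero
            rw [smul_eq_mul]
            simp [mul_inv_cancel₀ hne]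
          · simp [hsr]
  -- Part 1
  have part1 : a r = (1 / 2) * ∑ j ∈ Finset.Icc r n,
      S1Y g j r * (j.factorial : ℝ)⁻¹ * ((fwd^[j] q) 1 + (fwd^[j] q) 0) := by
    symm
    calc (1 / 2) * ∑ j ∈ Finset.Icc r n,
          S1Y g j r * (j.factorial : ℝ)⁻¹ * ((fwd^[j] q) 1 + (fwd^[j] q) 0)
        = (1 / 2) * ∑ j ∈ Finset.Icc r n, S1Y g j r * (j.factorial : ℝ)⁻¹ *
            (∑ s ∈ Finset.range (n+1), a s * (2 * cN s ((G - 1) ^ j))) := by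
          refine congrArg _ (Finset.sum_congr rfl fun j _ => ?_)
          rw [key2 j]
      _ = ∑ j ∈ Finset.Icc r n, ∑ s ∈ Finset.range (n+1), a s *
            ((s.factorial : ℝ) * ((j.factorial : ℝ)⁻¹ * S1Y g j r * PowerSeries.coeff (R := ℝ) s ((G - 1) ^ j))) := by
          simp only [Finset.mul_sum]
          refine Finset.sum_congr rfl fun j _ => Finset.sum_congr rfl fun s _ => ?_
          simp only [cN]
          ring
      _ = ∑ s ∈ Finset.range (n+1), a s * ((s.factorial : ℝ) * ∑ j ∈ Finset.Icc r n,
            (j.factorial : ℝ)⁻¹ * S1Y g j r * PowerSeries.coeff (R := ℝ) s ((G - 1) ^ j)) := by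
          rw [Finset.sum_comm]
          exact Finset.sum_congr rfl fun s _ => by rw [Finset.mul_sum, Finset.mul_sum]
      _ = ∑ s ∈ Finset.range (n+1), a s * (if s = r then 1 else 0) := by
          refine Finset.sum_congr rfl fun s hs => ?_
          rw [key3 s (by rw [Finset.mem_range] at hs; omega)]
      _ = a r := by
          simp only [mul_ite, mul_one, mul_zero]
          rw [Finset.sum_ite_eq' (Finset.range (n+1)) r a, if_pos (Finset.mem_range.mpr (by omega))]
  refine ⟨part1, ?_⟩
  -- Part 2
  have fwd_expand : ∀ (j : ℕ) (x : ℝ), (fwd^[j] q) x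
      = ∑ i ∈ Finset.range (j+1), (-1 : ℝ) ^ (j - i) * (j.choose i : ℝ) * q (x + i) := by
    intro j x
    have hfwd : fwd = fwdDiff (1 : ℝ) := rfl
    rw [hfwd, fwdDiff_iter_eq_sum_shift]
    refine Finset.sum_congr rfl fun i _ => ?_
    rw [zsmul_eq_mul, nsmul_eq_mul, mul_one]
    push_cast
    ring
  rw [part1]
  refine congrArg _ (Finset.sum_congr rfl fun j _ => ?_)
  rw [fwd_expand j 1, fwd_expand j 0, ← Finset.sum_add_distrib, Finset.mul_sum]
  refine Finset.sum_congr rfl fun i _ => ?_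
  rw [show (1 : ℝ) + (i : ℝ) = (i : ℝ) + 1 from add_comm _ _, zero_add]
  ring
end
end
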